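/- For all integers 1 ≤ k ≤ n: s_{n,k} = det N, where N is the k×k real matrix (rows and columns indexed 1,…,k) defined by N(i,1) = i · (−1)^{i(i−1)/2} C(n, i)_F, N(i,j) = (−1)^{(i−j+1)(i−j)/2} C(n, i−j+1)_F for 2 ≤ j ≤ i, N(i, i+1) = 1, and N(i,j) = 0 for j > i+1. -/

import Mathlib

/-- The Fibonomial coefficient `C(n,k)_F = ∏_{r=1}^{k} F_{n-r+1}/F_r`, as a real number.
It equals `0` when `k > n` and `1` when `k = 0`. -/
noncomputable def fibonomial (n k : ℕ) : ℝ :=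
  ∏ r ∈ Finset.range k, (Nat.fib (n - r) : ℝ) / (Nat.fib (r + 1) : ℝ)

/-- Power sums `s_{n,r} = Σ_{j=0}^{n−1} (α^{n−1−j} β^{j})^r` with
`α = (1+√5)/2`, `β = (1−√5)/2`. -/
noncomputable def powerSum (n r : ℕ) : ℝ :=
  ∑ j ∈ Finset.range n,
    (((1 + Real.sqrt 5) / 2) ^ (n - 1 - j) * ((1 - Real.sqrt 5) / 2) ^ j) ^ r

section aux
open goldenRatio Finset

lemma fibonomial_zero (n : ℕ) : fibonomial n 0 = 1 := by simp [fibonomial]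

lemma fibonomial_eq_zero {n k : ℕ} (h : n < k) : fibonomial n k = 0 := by
  apply Finset.prod_eq_zero (Finset.mem_range.2 h)
  simp [Nat.sub_self]

lemma fibonomial_succ (n k : ℕ) :
    fibonomial n (k + 1) = fibonomial n k * ((Nat.fib (n - k) : ℝ) / (Nat.fib (k + 1) : ℝ)) := by
  rw [fibonomial, Finset.prod_range_succ]; rfl

lemma fib_pos_real (k : ℕ) : (0 : ℝ) < (Nat.fib (k+1) : ℝ) := by
  exact_mod_cast Nat.fib_pos.2 (Nat.succ_pos k)

/-- telescoping: C(n+1,k+1) = fib(n+1)/fib(k+1) * C(n,k) -/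
lemma fibonomial_succ_succ (n k : ℕ) :
    fibonomial (n+1) (k+1) = (Nat.fib (n+1) : ℝ) / (Nat.fib (k+1) : ℝ) * fibonomial n k := by
  induction k with
  | zero => simp [fibonomial_succ, fibonomial_zero]
  | succ m ih =>
      rw [fibonomial_succ (n+1) (m+1), ih, fibonomial_succ n m]
      have : n + 1 - (m + 1) = n - m := by omega
      rw [this]
      ring

/-- the key Fibonacci identity: φ^(k+1) fib(n-k) + ψ^(n-k) fib(k+1) = fib(n+1), k ≤ n -/
lemma fib_split {n k : ℕ} (h : k ≤ n) :
    φ ^ (k+1) * (Nat.fib (n-k) : ℝ) + ψ ^ (n-k) * (Nat.fib (k+1) : ℝ) = (Nat.fib (n+1) : ℝ) := by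
  obtain ⟨m, rfl⟩ : ∃ m, n = m + k := ⟨n - k, by omega⟩
  have hm : m + k - k = m := by omega
  rw [hm, Real.coe_fib_eq, Real.coe_fib_eq, Real.coe_fib_eq]
  have h5 : Real.sqrt 5 ≠ 0 := by positivity
  field_simp
  ring_nf

/-- q-Pascal rule for fibonomials -/
lemma fibonomial_pascal (n k : ℕ) :
    fibonomial (n+1) (k+1) = φ ^ (k+1) * fibonomial n (k+1) + ψ ^ (n-k) * fibonomial n k := by
  by_cases h : k ≤ n
  · rw [fibonomial_succ_succ, fibonomial_succ]
    have hk1 : (Nat.fib (k+1) : ℝ) ≠ 0 := ne_of_gt (fib_pos_real k)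
    rw [← fib_split h]
    field_simp
  · push_neg at h
    rw [fibonomial_eq_zero (by omega : n < k), fibonomial_eq_zero (by omega : n < k+1),
      fibonomial_eq_zero (by omega : n+1 < k+1)]
    ring

noncomputable def Efib (n r : ℕ) : ℝ := (-1)^(r*(r-1)/2) * fibonomial n r

lemma tri_succ (r : ℕ) : (r+1)*r/2 = r*(r-1)/2 + r := by
  cases r with
  | zero => rfl
  | succ m =>
      have h : (m+2)*(m+1) = (m+1)*m + 2*(m+1) := by ring
      simp only [Nat.add_sub_cancel]
      rw [h, Nat.add_mul_div_left _ _ (by norm_num : 0 < 2)]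

lemma Multiset.esymm_cons (a : ℝ) (s : Multiset ℝ) (r : ℕ) :
    (a ::ₘ s).esymm (r+1) = s.esymm (r+1) + a * s.esymm r := by
  simp only [Multiset.esymm, Multiset.powersetCard_cons, Multiset.map_add, Multiset.sum_add,
    Multiset.map_map]
  congr 1
  rw [← Multiset.sum_map_mul_left]
  congr 1
  apply Multiset.map_congr rfl
  intro x _
  simp [Multiset.prod_cons]

lemma Multiset.esymm_mul (c : ℝ) (s : Multiset ℝ) (r : ℕ) :
    (s.map (fun x => c * x)).esymm r = c ^ r * s.esymm r := by
  have := Multiset.pow_smul_esymm c r s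
  simp only [smul_eq_mul] at this
  rw [← this]

noncomputable def rootsM (n : ℕ) : Multiset ℝ :=
  (Multiset.range n).map (fun j => φ ^ (n - 1 - j) * ψ ^ j)

lemma rootsM_succ (n : ℕ) :
    rootsM (n+1) = ψ ^ n ::ₘ (rootsM n).map (fun x => φ * x) := by
  rw [rootsM, Multiset.range_succ, Multiset.map_cons]
  congr 1
  · simp
  · rw [rootsM, Multiset.map_map]
    apply Multiset.map_congr rfl
    intro j hj
    have hj' : j < n := Multiset.mem_range.1 hj
    have h1 : n + 1 - 1 - j = (n - 1 - j) + 1 := by omega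
    simp only [Function.comp_apply, h1, pow_succ]
    ring

lemma multiset_esymm_zero (s : Multiset ℝ) : s.esymm 0 = 1 := by
  simp [Multiset.esymm]

lemma Efib_rec (n r : ℕ) :
    Efib (n+1) (r+1) = φ^(r+1) * Efib n (r+1) + ψ^n * (φ^r * Efib n r) := by
  by_cases h : r ≤ n
  · obtain ⟨m, rfl⟩ : ∃ m, n = m + r := ⟨n - r, by omega⟩
    have hmr : m + r - r = m := by omega
    have key : ((-1:ℝ))^r = ψ^r * φ^r := by rw [← mul_pow, Real.goldenConj_mul_goldenRatio]
    simp only [Efib, Nat.add_sub_cancel, tri_succ, pow_add]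
    rw [fibonomial_pascal, hmr]
    linear_combination ((-1:ℝ))^(r*(r-1)/2) * fibonomial (m+r) r * ψ^m * key
  · push_neg at h
    rw [Efib, Efib, Efib, fibonomial_eq_zero (by omega : n < r),
      fibonomial_eq_zero (by omega : n < r+1), fibonomial_eq_zero (by omega : n+1 < r+1)]
    ring

lemma esymm_rootsM (n : ℕ) : ∀ r, (rootsM n).esymm r = Efib n r := by
  induction n with
  | zero =>
      intro r
      cases r with
      | zero => simp [multiset_esymm_zero, Efib, fibonomial_zero]
      | succ m =>
          rw [Efib, fibonomial_eq_zero (by omega : 0 < m+1)]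
          simp [rootsM, Multiset.esymm, Multiset.powersetCard_zero_right]
  | succ n ih =>
      intro r
      cases r with
      | zero => simp [multiset_esymm_zero, Efib, fibonomial_zero]
      | succ r =>
          rw [rootsM_succ, Multiset.esymm_cons, Multiset.esymm_mul, Multiset.esymm_mul,
            ih, ih, Efib_rec]

lemma univ_val_map (n : ℕ) (g : ℕ → ℝ) :
    (Finset.univ.val.map (fun i : Fin n => g i.val)) = (Multiset.range n).map g := by
  calc Finset.univ.val.map (fun i : Fin n => g i.val)
      = ((Finset.univ : Finset (Fin n)).val.map Fin.val).map g := by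
        rw [Multiset.map_map]; rfl
    _ = ((Finset.univ.map Fin.valEmbedding).val).map g := rfl
    _ = (Multiset.range n).map g := by
        rw [Fin.map_valEmbedding_univ, Nat.Iio_eq_range, Finset.range_val]

noncomputable def xroot (n : ℕ) : Fin n → ℝ := fun i => φ ^ (n - 1 - i.val) * ψ ^ i.val

lemma gold_eq : φ = (1 + Real.sqrt 5) / 2 := rfl
lemma goldConj_eq : ψ = (1 - Real.sqrt 5) / 2 := rfl

lemma aeval_psum (n r : ℕ) :
    MvPolynomial.aeval (xroot n) (MvPolynomial.psum (Fin n) ℝ r) = powerSum n r := by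
  rw [MvPolynomial.psum, map_sum, powerSum, ← Fin.sum_univ_eq_sum_range]
  apply Finset.sum_congr rfl
  intro i _
  simp [xroot, gold_eq, goldConj_eq]

lemma aeval_esymm (n r : ℕ) :
    MvPolynomial.aeval (xroot n) (MvPolynomial.esymm (Fin n) ℝ r) = Efib n r := by
  rw [MvPolynomial.aeval_esymm_eq_multiset_esymm]
  have : (Finset.univ.val.map (xroot n)) = rootsM n := by
    rw [rootsM, ← univ_val_map n (fun j => φ ^ (n - 1 - j) * ψ ^ j)]
    rfl
  rw [this, esymm_rootsM]

lemma newton_real (n m : ℕ) :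
    powerSum n (m+1) = (∑ i ∈ Finset.range m, (-1:ℝ)^i * Efib n (i+1) * powerSum n (m-i))
      + (-1:ℝ)^m * (m+1) * Efib n (m+1) := by
  have H := MvPolynomial.psum_eq_mul_esymm_sub_sum (Fin n) ℝ (m+1) (by omega)
  have H2 := congrArg (MvPolynomial.aeval (xroot n)) H
  simp only [map_sub, map_mul, map_pow, map_neg, map_one, map_natCast, map_sum,
    aeval_psum, aeval_esymm] at H2
  rw [H2]
  have hsum : ∑ a ∈ (Finset.HasAntidiagonal.antidiagonal (m+1)).filter (fun a => a.1 ∈ Set.Ioo 0 (m+1)),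
      ((-1:ℝ))^a.1 * Efib n a.1 * powerSum n a.2
      = ∑ i ∈ Finset.range m, ((-1:ℝ))^(i+1) * Efib n (i+1) * powerSum n (m-i) := by
    refine Finset.sum_bij' (fun a _ => a.1 - 1) (fun i _ => (i+1, m-i)) ?_ ?_ ?_ ?_ ?_
    · intro a ha
      simp only [Finset.mem_filter, Finset.HasAntidiagonal.mem_antidiagonal, Set.mem_Ioo] at ha
      simp only [Finset.mem_range]
      omega
    · intro i hi
      simp only [Finset.mem_range] at hi
      simp only [Finset.mem_filter, Finset.HasAntidiagonal.mem_antidiagonal, Set.mem_Ioo]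
      omega
    · intro a ha
      simp only [Finset.mem_filter, Finset.HasAntidiagonal.mem_antidiagonal, Set.mem_Ioo] at ha
      have : a.1 - 1 + 1 = a.1 := by omega
      ext <;> simp <;> omega
    · intro i hi
      simp
    · intro a ha
      simp only [Finset.mem_filter, Finset.HasAntidiagonal.mem_antidiagonal, Set.mem_Ioo] at ha
      have h1 : a.1 - 1 + 1 = a.1 := by omega
      have h2 : m - (a.1 - 1) = a.2 := by omega
      rw [h1, h2]
  have hpow : ((-1:ℝ))^(m+1+1) = (-1:ℝ)^m := by
    rw [pow_succ, pow_succ]; ring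
  have hneg : ∀ i ∈ Finset.range m, (-1:ℝ)^(i+1) * Efib n (i+1) * powerSum n (m-i)
      = -(((-1:ℝ))^i * Efib n (i+1) * powerSum n (m-i)) := by
    intro i _; ring
  rw [hsum, hpow, Finset.sum_congr rfl hneg, Finset.sum_neg_distrib]
  push_cast
  ring

noncomputable def pat (n i j : ℕ) : ℝ :=
  if j = 0 then (i + 1 : ℝ) * (-1 : ℝ) ^ ((i + 1) * i / 2) * fibonomial n (i + 1)
  else if j = i + 1 then 1
  else if j ≤ i then (-1 : ℝ) ^ ((i - j + 1) * (i - j) / 2) * fibonomial n (i - j + 1)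
  else 0

lemma pat_col0 (n i : ℕ) : pat n i 0 = (i + 1 : ℝ) * Efib n (i + 1) := by
  rw [pat, Efib, if_pos rfl, Nat.add_sub_cancel]
  ring

lemma pat_diag (n i : ℕ) : pat n i (i + 1) = 1 := by
  simp [pat]

lemma pat_low (n i j : ℕ) (h1 : 0 < j) (h2 : j ≤ i) : pat n i j = Efib n (i - j + 1) := by
  have hj0 : j ≠ 0 := by omega
  have hji : j ≠ i + 1 := by omega
  simp only [pat, if_neg hj0, if_neg hji, if_pos h2, Efib, Nat.add_sub_cancel]

lemma pat_high (n i j : ℕ) (h : i + 1 < j) : pat n i j = 0 := by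
  have hj0 : j ≠ 0 := by omega
  have hji : j ≠ i + 1 := by omega
  have hle : ¬ j ≤ i := by omega
  simp only [pat, if_neg hj0, if_neg hji, if_neg hle]

noncomputable def Rm (n m d : ℕ) : Matrix (Fin m) (Fin m) ℝ :=
  Matrix.of fun i j => if (i : ℕ) = m - 1 then pat n (m - 1 + d) j.val else pat n i.val j.val

lemma det_Rm_one (n d : ℕ) : (Rm n 1 d).det = (d + 1 : ℝ) * Efib n (d + 1) := by
  rw [Matrix.det_fin_one]
  have h : Rm n 1 d 0 0 = pat n d 0 := by simp [Rm]
  rw [h, pat_col0]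

lemma det_Rm_rec (n m d : ℕ) :
    (Rm n (m+2) d).det = Efib n (d+1) * (Rm n (m+1) 0).det - (Rm n (m+1) (d+1)).det := by
  rw [Matrix.det_succ_column (Rm n (m+2) d) (Fin.last (m+1))]
  rw [Fin.sum_univ_castSucc, Fin.sum_univ_castSucc]
  have hz : ∀ i : Fin m, ((-1:ℝ)) ^ (((i.castSucc.castSucc : Fin (m+2)) : ℕ) + ((Fin.last (m+1) : Fin (m+2)) : ℕ))
      * Rm n (m+2) d i.castSucc.castSucc (Fin.last (m+1))
      * ((Rm n (m+2) d).submatrix i.castSucc.castSucc.succAbove (Fin.last (m+1)).succAbove).det = 0 := by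
    intro i
    have hval : ((i.castSucc.castSucc : Fin (m+2)) : ℕ) = (i : ℕ) := rfl
    have hi : (i : ℕ) < m := i.isLt
    have : Rm n (m+2) d i.castSucc.castSucc (Fin.last (m+1)) = 0 := by
      show (if ((i.castSucc.castSucc : Fin (m+2)) : ℕ) = (m+2) - 1 then _ else _) = (0:ℝ)
      rw [hval, if_neg (by omega), Fin.val_last, pat_high n _ _ (by omega)]
    rw [this]; ring
  rw [Finset.sum_congr rfl (fun i _ => hz i), Finset.sum_const_zero, zero_add]
  -- two remaining terms
  have hsub1 : (Rm n (m+2) d).submatrix (Fin.last (m+1)).succAbove (Fin.last (m+1)).succAbove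
      = Rm n (m+1) 0 := by
    ext p q
    simp only [Matrix.submatrix_apply, Fin.succAbove_last, Rm, Matrix.of_apply]
    have hp : ((p.castSucc : Fin (m+2)) : ℕ) = (p : ℕ) := rfl
    rw [hp]
    have hq : ((q.castSucc : Fin (m+2)) : ℕ) = (q : ℕ) := rfl
    rw [hq]
    by_cases h : (p : ℕ) = m
    · rw [if_neg (by omega), if_pos (by omega)]
      have : (m+1) - 1 + 0 = (p : ℕ) := by omega
      rw [this]
    · rw [if_neg (by omega), if_neg (by omega)]
  have hsub2 : (Rm n (m+2) d).submatrix ((Fin.last m).castSucc).succAbove (Fin.last (m+1)).succAbove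
      = Rm n (m+1) (d+1) := by
    ext p q
    simp only [Matrix.submatrix_apply, Fin.succAbove_last, Rm, Matrix.of_apply]
    have hq : ((q.castSucc : Fin (m+2)) : ℕ) = (q : ℕ) := rfl
    rw [hq]
    by_cases h : (p : ℕ) < m
    · have hsa : (((Fin.last m).castSucc.succAbove p : Fin (m+2)) : ℕ) = (p : ℕ) := by
        rw [Fin.succAbove_of_castSucc_lt]
        · rfl
        · rw [Fin.lt_def]; simpa using h
      rw [hsa, if_neg (by omega), if_neg (by omega)]
    · have hp : (p : ℕ) = m := by omega
      have hsa : (((Fin.last m).castSucc.succAbove p : Fin (m+2)) : ℕ) = m + 1 := by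
        rw [Fin.succAbove_of_le_castSucc]
        · show (p : ℕ) + 1 = m + 1; omega
        · rw [Fin.le_def]; show m ≤ (p:ℕ); omega
      rw [hsa, if_pos (by omega), if_pos (by omega)]
      have h1 : m + 2 - 1 + d = m + 1 + d := by omega
      have h2 : m + 1 - 1 + (d + 1) = m + 1 + d := by omega
      rw [h1, h2]
  rw [hsub1, hsub2]
  have hA1 : Rm n (m+2) d (Fin.last (m+1)) (Fin.last (m+1)) = Efib n (d+1) := by
    show (if ((Fin.last (m+1) : Fin (m+2)) : ℕ) = (m+2)-1 then pat n ((m+2)-1+d) ((Fin.last (m+1) : Fin (m+2)) : ℕ) else _) = _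
    rw [Fin.val_last, if_pos (by omega)]
    rw [pat_low n _ _ (by omega) (by omega)]
    congr 1
    omega
  have hA2 : Rm n (m+2) d ((Fin.last m).castSucc) (Fin.last (m+1)) = 1 := by
    show (if (((Fin.last m).castSucc : Fin (m+2)) : ℕ) = (m+2)-1 then _ else pat n (((Fin.last m).castSucc : Fin (m+2)) : ℕ) ((Fin.last (m+1) : Fin (m+2)) : ℕ)) = _
    have : (((Fin.last m).castSucc : Fin (m+2)) : ℕ) = m := rfl
    rw [this, if_neg (by omega), Fin.val_last, pat_diag]
  rw [hA1, hA2]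
  have hc1 : ((-1:ℝ)) ^ (((Fin.last (m+1) : Fin (m+2)) : ℕ) + ((Fin.last (m+1) : Fin (m+2)) : ℕ)) = 1 := by
    rw [Fin.val_last]
    exact Even.neg_one_pow ⟨m+1, by omega⟩
  have hc2 : ((-1:ℝ)) ^ ((((Fin.last m).castSucc : Fin (m+2)) : ℕ) + ((Fin.last (m+1) : Fin (m+2)) : ℕ)) = -1 := by
    have : (((Fin.last m).castSucc : Fin (m+2)) : ℕ) = m := rfl
    rw [this, Fin.val_last]
    exact Odd.neg_one_pow ⟨m, by omega⟩
  rw [hc1, hc2]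
  ring

noncomputable def Vv (n : ℕ) : ℕ → ℕ → ℝ
  | 0, _ => 1
  | 1, d => ((d : ℝ) + 1) * Efib n (d + 1)
  | (m+2), d => Efib n (d+1) * Vv n (m+1) 0 - Vv n (m+1) (d+1)

lemma det_Rm_eq_V (n : ℕ) : ∀ m d, (Rm n (m+1) d).det = Vv n (m+1) d := by
  intro m
  induction m with
  | zero => intro d; rw [det_Rm_one]; rfl
  | succ p ih => intro d; rw [det_Rm_rec, ih, ih]; rfl

lemma V_unfold (n : ℕ) : ∀ m d, Vv n (m+1) d =
    (∑ i ∈ Finset.range m, (-1:ℝ)^i * Efib n (d+1+i) * Vv n (m-i) 0)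
      + (-1:ℝ)^m * ((m : ℝ) + 1 + (d : ℝ)) * Efib n (m+1+d) := by
  intro m
  induction m with
  | zero =>
      intro d
      simp only [Vv, Finset.range_zero, Finset.sum_empty, zero_add, pow_zero,
        Nat.zero_add, Nat.cast_zero]
      rw [Nat.add_comm 1 d]
      ring
  | succ m ih =>
      intro d
      show Efib n (d+1) * Vv n (m+1) 0 - Vv n (m+1) (d+1) = _
      rw [ih (d+1), Finset.sum_range_succ']
      have hcong : ∀ i ∈ Finset.range m,
          (-1:ℝ)^(i+1) * Efib n (d+1+(i+1)) * Vv n (m+1-(i+1)) 0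
          = -((-1:ℝ)^i * Efib n (d+1+1+i) * Vv n (m-i) 0) := by
        intro i _
        have h1 : d+1+(i+1) = d+1+1+i := by omega
        have h2 : m+1-(i+1) = m-i := by omega
        rw [h1, h2]; ring
      rw [Finset.sum_congr rfl hcong, Finset.sum_neg_distrib]
      have h3 : m+1+1+d = m+1+(d+1) := by omega
      rw [h3]
      push_cast
      ring

lemma V_eq_powerSum (n : ℕ) : ∀ m, Vv n (m+1) 0 = powerSum n (m+1) := by
  intro m
  induction m using Nat.strong_induction_on with
  | _ m ih =>
    rw [V_unfold, newton_real n m]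
    congr 1
    · apply Finset.sum_congr rfl
      intro i hi
      have hi' : i < m := Finset.mem_range.1 hi
      have h1 : m - i = (m - i - 1) + 1 := by omega
      have h2 : 0 + 1 + i = i + 1 := by omega
      rw [h2, h1, ih (m-i-1) (by omega), ← h1]
    · have h4 : m + 1 + 0 = m + 1 := by omega
      rw [h4]
      push_cast
      ring

end aux

theorem powerSum_det_fibonomial (n k : ℕ) (hk : 1 ≤ k) (hkn : k ≤ n) :
    powerSum n k =
      Matrix.det (Matrix.of fun i j : Fin k =>
        if (j : ℕ) = 0 then
          ((i : ℕ) + 1 : ℝ) * (-1 : ℝ) ^ (((i : ℕ) + 1) * (i : ℕ) / 2) *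
            fibonomial n ((i : ℕ) + 1)
        else if (j : ℕ) = (i : ℕ) + 1 then 1
        else if (j : ℕ) ≤ (i : ℕ) then
          (-1 : ℝ) ^ ((((i : ℕ) - (j : ℕ)) + 1) * ((i : ℕ) - (j : ℕ)) / 2) *
            fibonomial n (((i : ℕ) - (j : ℕ)) + 1)
        else 0) := by
  have hM : (Matrix.of fun i j : Fin k =>
        if (j : ℕ) = 0 then
          ((i : ℕ) + 1 : ℝ) * (-1 : ℝ) ^ (((i : ℕ) + 1) * (i : ℕ) / 2) *
            fibonomial n ((i : ℕ) + 1)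
        else if (j : ℕ) = (i : ℕ) + 1 then 1
        else if (j : ℕ) ≤ (i : ℕ) then
          (-1 : ℝ) ^ ((((i : ℕ) - (j : ℕ)) + 1) * ((i : ℕ) - (j : ℕ)) / 2) *
            fibonomial n (((i : ℕ) - (j : ℕ)) + 1)
        else 0) = Rm n k 0 := by
    ext i j
    simp only [Matrix.of_apply, Rm]
    by_cases h : (i : ℕ) = k - 1
    · rw [if_pos h]
      have : k - 1 + 0 = (i : ℕ) := by omega
      rw [this]
      rfl
    · rw [if_neg h]
      rfl
  rw [hM]
  obtain ⟨m, rfl⟩ : ∃ m, k = m + 1 := ⟨k - 1, by omega⟩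
  rw [det_Rm_eq_V, V_eq_powerSum]
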